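/- arXiv:0903.3372 — 2 statements merged into one kernel-verified Lean document; each statement's English description precedes it below -/
import Mathlib

section
/- Let S be a nonempty subset of a real inner product space E. The function x ↦ ‖x‖² − d_S(x)² is convex on E. -/
/-- For a nonempty subset `S` of a real inner product space `E`, the function
`x ↦ ‖x‖² − d_S(x)²` is convex on `E`. -/
theorem convexOn_norm_sq_sub_infDist_sq {E : Type*} [NormedAddCommGroup E]
    [InnerProductSpace ℝ E] (S : Set E) (hS : S.Nonempty) :
    ConvexOn ℝ Set.univ (fun x : E => ‖x‖ ^ 2 - Metric.infDist x S ^ 2) := by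
  refine ⟨convex_univ, fun x _ y _ a b ha hb hab => ?_⟩
  simp only
  set z := a • x + b • y with hz
  set r : ℝ := ‖z‖ ^ 2 + a * (Metric.infDist x S ^ 2 - ‖x‖ ^ 2)
      + b * (Metric.infDist y S ^ 2 - ‖y‖ ^ 2) with hr
  -- key pointwise inequality
  have key : ∀ c ∈ S, r ≤ dist z c ^ 2 := by
    intro c hc
    have hxc : Metric.infDist x S ≤ dist x c := Metric.infDist_le_dist_of_mem hc
    have hyc : Metric.infDist y S ≤ dist y c := Metric.infDist_le_dist_of_mem hc
    have hx0 : 0 ≤ Metric.infDist x S := Metric.infDist_nonneg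
    have hy0 : 0 ≤ Metric.infDist y S := Metric.infDist_nonneg
    have hxc2 : Metric.infDist x S ^ 2 ≤ dist x c ^ 2 := by
      exact pow_le_pow_left₀ hx0 hxc 2
    have hyc2 : Metric.infDist y S ^ 2 ≤ dist y c ^ 2 := by
      exact pow_le_pow_left₀ hy0 hyc 2
    -- affine identity : ‖z - c‖² - ‖z‖² = a (‖x-c‖² - ‖x‖²) + b (‖y-c‖² - ‖y‖²)
    have hzc : z - c = a • (x - c) + b • (y - c) := by
      have h1 : a • (x - c) + b • (y - c) = a • x + b • y - (a + b) • c := by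
        rw [smul_sub, smul_sub, add_smul]; abel
      rw [hz, h1, hab, one_smul]
    have e1 : ‖z - c‖ ^ 2 = ‖z‖ ^ 2 - 2 * inner ℝ z c + ‖c‖ ^ 2 := by
      rw [@norm_sub_sq_real]
    have e2 : ‖x - c‖ ^ 2 = ‖x‖ ^ 2 - 2 * inner ℝ x c + ‖c‖ ^ 2 := by
      rw [@norm_sub_sq_real]
    have e3 : ‖y - c‖ ^ 2 = ‖y‖ ^ 2 - 2 * inner ℝ y c + ‖c‖ ^ 2 := by
      rw [@norm_sub_sq_real]
    have einner : (inner ℝ z c : ℝ) = a * inner ℝ x c + b * inner ℝ y c := by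
      rw [hz, inner_add_left, real_inner_smul_left, real_inner_smul_left]
    have affine : ‖z - c‖ ^ 2 - ‖z‖ ^ 2
        = a * (‖x - c‖ ^ 2 - ‖x‖ ^ 2) + b * (‖y - c‖ ^ 2 - ‖y‖ ^ 2) := by
      rw [e1, e2, e3, einner]
      nlinarith [hab]
    have hdx : dist x c = ‖x - c‖ := dist_eq_norm x c
    have hdy : dist y c = ‖y - c‖ := dist_eq_norm y c
    have hdz : dist z c = ‖z - c‖ := dist_eq_norm z c
    rw [hdz, hr]
    rw [hdx] at hxc2
    rw [hdy] at hyc2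
    nlinarith [affine, mul_le_mul_of_nonneg_left hxc2 ha, mul_le_mul_of_nonneg_left hyc2 hb]
  -- deduce r ≤ infDist z S ^ 2
  have hmain : r ≤ Metric.infDist z S ^ 2 := by
    rcases le_or_gt r 0 with h0 | h0
    · exact h0.trans (sq_nonneg _)
    · have hle : Real.sqrt r ≤ Metric.infDist z S := by
        haveI := hS.to_subtype
        rw [Metric.infDist_eq_iInf]
        refine le_ciInf fun c => ?_
        obtain ⟨c, hc⟩ := c
        have := key c hc
        calc Real.sqrt r ≤ Real.sqrt (dist z c ^ 2) := Real.sqrt_le_sqrt this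
          _ = dist z c := by rw [Real.sqrt_sq dist_nonneg]
      calc r = Real.sqrt r ^ 2 := (Real.sq_sqrt h0.le).symm
        _ ≤ Metric.infDist z S ^ 2 := pow_le_pow_left₀ (Real.sqrt_nonneg _) hle 2
  rw [hr] at hmain
  simp only [smul_eq_mul]
  nlinarith [hmain]
end

section
/- The second Fréchet derivative of the mollified squared distance φ_δ satisfies 0 ≤ D²φ_δ(x)[v, v] ≤ 2‖v‖² for every x, v ∈ ℝ^n. -/
open MeasureTheory Metric Set

section Aux

/-- If `g` is monotone and has derivative `g'` at `a`, then `0 ≤ g'`. -/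
lemma aux_deriv_nonneg_of_monotone {g : ℝ → ℝ} {g' a : ℝ} (hm : Monotone g)
    (h : HasDerivAt g g' a) : 0 ≤ g' := by
  have ht := hasDerivAt_iff_tendsto_slope.1 h
  refine ge_of_tendsto ht ?_
  filter_upwards [self_mem_nhdsWithin] with t (ht : t ≠ a)
  rw [slope_def_field]
  rcases lt_or_gt_of_ne ht with h1 | h1
  · have : g t ≤ g a := hm h1.le
    have e : (g t - g a) / (t - a) = (g a - g t) / (a - t) := by
      rw [div_eq_div_iff (by linarith) (by linarith)]; ring
    rw [e]; exact div_nonneg (by linarith) (by linarith)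
  · have : g a ≤ g t := hm h1.le
    exact div_nonneg (by linarith) (by linarith)

variable {n : ℕ}

local notation "E" => EuclideanSpace ℝ (Fin n)

/-- The squared distance to a nonempty closed convex set is convex. -/
lemma aux_infDist_sq_convexOn (C : Set E) (hne : C.Nonempty) (hclosed : IsClosed C)
    (hconv : Convex ℝ C) : ConvexOn ℝ Set.univ (fun x : E => infDist x C ^ 2) := by
  refine ⟨convex_univ, fun x _ z _ a b ha hb hab => ?_⟩
  obtain ⟨cx, hcxC, hcx⟩ := hclosed.exists_infDist_eq_dist hne x
  obtain ⟨cz, hczC, hcz⟩ := hclosed.exists_infDist_eq_dist hne z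
  have hc' : a • cx + b • cz ∈ C := hconv hcxC hczC ha hb hab
  have h1 : infDist (a • x + b • z) C ≤ ‖(a • x + b • z) - (a • cx + b • cz)‖ := by
    rw [← dist_eq_norm]; exact infDist_le_dist_of_mem hc'
  have h2 : ‖(a • x + b • z) - (a • cx + b • cz)‖ ≤ a * ‖x - cx‖ + b * ‖z - cz‖ := by
    have e : (a • x + b • z) - (a • cx + b • cz) = a • (x - cx) + b • (z - cz) := by module
    rw [e]
    calc ‖a • (x - cx) + b • (z - cz)‖ ≤ ‖a • (x - cx)‖ + ‖b • (z - cz)‖ := norm_add_le _ _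
      _ = a * ‖x - cx‖ + b * ‖z - cz‖ := by
          rw [norm_smul, norm_smul, Real.norm_eq_abs, Real.norm_eq_abs,
            abs_of_nonneg ha, abs_of_nonneg hb]
  have h0 : (0:ℝ) ≤ infDist (a • x + b • z) C := infDist_nonneg
  have hp : (0:ℝ) ≤ ‖x - cx‖ := norm_nonneg _
  have hq : (0:ℝ) ≤ ‖z - cz‖ := norm_nonneg _
  simp only [smul_eq_mul]
  rw [hcx, hcz, dist_eq_norm, dist_eq_norm]
  nlinarith [sq_nonneg (‖x - cx‖ - ‖z - cz‖), mul_nonneg ha hb, h1.trans h2]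

/-- `‖x‖² - d_C(x)²` is convex. -/
lemma aux_normsq_sub_convexOn (C : Set E) (hne : C.Nonempty) (hclosed : IsClosed C) :
    ConvexOn ℝ Set.univ (fun x : E => ‖x‖ ^ 2 - infDist x C ^ 2) := by
  refine ⟨convex_univ, fun x _ z _ a b ha hb hab => ?_⟩
  obtain ⟨c, hcC, hc⟩ := hclosed.exists_infDist_eq_dist hne (a • x + b • z)
  have key : ∀ w : E, 2 * (inner ℝ w c : ℝ) - ‖c‖ ^ 2 ≤ ‖w‖ ^ 2 - infDist w C ^ 2 := by
    intro w
    have h1 : infDist w C ≤ ‖w - c‖ := by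
      rw [← dist_eq_norm]; exact infDist_le_dist_of_mem hcC
    have h2 : infDist w C ^ 2 ≤ ‖w - c‖ ^ 2 :=
      pow_le_pow_left₀ infDist_nonneg h1 2
    have h3 : ‖w - c‖ ^ 2 = ‖w‖ ^ 2 - 2 * (inner ℝ w c : ℝ) + ‖c‖ ^ 2 := norm_sub_sq_real w c
    linarith
  have heq : ‖a • x + b • z‖ ^ 2 - infDist (a • x + b • z) C ^ 2
      = 2 * (inner ℝ (a • x + b • z) c : ℝ) - ‖c‖ ^ 2 := by
    rw [hc, dist_eq_norm, norm_sub_sq_real]; ring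
  have hin : (inner ℝ (a • x + b • z) c : ℝ) = a * (inner ℝ x c : ℝ) + b * (inner ℝ z c : ℝ) := by
    rw [inner_add_left, real_inner_smul_left, real_inner_smul_left]
  simp only [smul_eq_mul]
  rw [heq, hin]
  have kx := key x
  have kz := key z
  nlinarith [mul_le_mul_of_nonneg_left kx ha, mul_le_mul_of_nonneg_left kz hb]

/-- Integrability of `u(x - ·) * k` for continuous `u` and compactly supported continuous `k`. -/
lemma aux_integrable_conv {u k : EuclideanSpace ℝ (Fin n) → ℝ} (hucont : Continuous u)
    (hkcont : Continuous k) (hksupp : HasCompactSupport k) (x : E) :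
    Integrable (fun y => u (x - y) * k y) := by
  apply Continuous.integrable_of_hasCompactSupport
  · exact (hucont.comp (continuous_const.sub continuous_id)).mul hkcont
  · exact hksupp.mul_left

/-- Convolution with a nonnegative kernel preserves convexity. -/
lemma aux_conv_convexOn {u k : EuclideanSpace ℝ (Fin n) → ℝ}
    (hu : ConvexOn ℝ Set.univ u) (hucont : Continuous u) (hkcont : Continuous k)
    (hkpos : ∀ y, 0 ≤ k y) (hksupp : HasCompactSupport k) :
    ConvexOn ℝ Set.univ (fun x : E => ∫ y, u (x - y) * k y) := by
  refine ⟨convex_univ, fun x _ z _ a b ha hb hab => ?_⟩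
  simp only [smul_eq_mul]
  have hix := aux_integrable_conv hucont hkcont hksupp x
  have hiz := aux_integrable_conv hucont hkcont hksupp z
  have h1 : ∀ y : E, u ((a • x + b • z) - y) * k y
      ≤ a * (u (x - y) * k y) + b * (u (z - y) * k y) := by
    intro y
    have e : (a • x + b • z) - y = a • (x - y) + b • (z - y) := by
      have : a • (x - y) + b • (z - y) = a • x + b • z - (a + b) • y := by module
      rw [this, hab, one_smul]
    have := hu.2 (mem_univ (x - y)) (mem_univ (z - y)) ha hb hab
    rw [e]
    calc u (a • (x - y) + b • (z - y)) * k y ≤ (a * u (x - y) + b * u (z - y)) * k y := by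
          apply mul_le_mul_of_nonneg_right _ (hkpos y)
          simpa using this
      _ = a * (u (x - y) * k y) + b * (u (z - y) * k y) := by ring
  calc (∫ y, u ((a • x + b • z) - y) * k y)
      ≤ ∫ y, (a * (u (x - y) * k y) + b * (u (z - y) * k y)) :=
        integral_mono (aux_integrable_conv hucont hkcont hksupp _)
          ((hix.const_mul a).add (hiz.const_mul b)) h1
    _ = a * (∫ y, u (x - y) * k y) + b * ∫ y, u (z - y) * k y := by
        rw [integral_add (hix.const_mul a) (hiz.const_mul b),
          integral_const_mul, integral_const_mul]

section kernel
variable (η : EuclideanSpace ℝ (Fin n) → ℝ) (δ : ℝ)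

lemma aux_k_smooth (hsm : ContDiff ℝ (⊤ : ℕ∞) η) :
    ContDiff ℝ (⊤ : ℕ∞) (fun y : E => (δ ^ n)⁻¹ * η (δ⁻¹ • y)) :=
  contDiff_const.mul (hsm.comp (contDiff_id.const_smul δ⁻¹))

lemma aux_k_supp (hsupp : Function.support η ⊆ Metric.closedBall 0 1) (hδ : 0 < δ) :
    HasCompactSupport (fun y : E => (δ ^ n)⁻¹ * η (δ⁻¹ • y)) := by
  apply HasCompactSupport.intro (isCompact_closedBall (0 : E) δ)
  intro y hy
  have h1 : δ < ‖y‖ := by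
    simpa [mem_closedBall, dist_eq_norm, not_le] using hy
  have h2 : η (δ⁻¹ • y) = 0 := by
    by_contra h
    have := hsupp (Function.mem_support.2 h)
    rw [mem_closedBall, dist_zero_right, norm_smul, Real.norm_eq_abs,
      abs_of_nonneg (inv_nonneg.2 hδ.le)] at this
    have h3 : δ⁻¹ * ‖y‖ ≤ 1 := this
    have h4 : 0 < δ⁻¹ := inv_pos.2 hδ
    have h5 : δ⁻¹ * δ < δ⁻¹ * ‖y‖ := by exact mul_lt_mul_of_pos_left h1 h4
    rw [inv_mul_cancel₀ hδ.ne'] at h5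
    linarith
  simp [h2]

lemma aux_k_int (hδ : 0 < δ) (hint : ∫ x, η x = 1) :
    ∫ y : E, (δ ^ n)⁻¹ * η (δ⁻¹ • y) = 1 := by
  rw [integral_const_mul]
  rw [Measure.integral_comp_inv_smul_of_nonneg (volume : Measure E) η hδ.le]
  rw [finrank_euclideanSpace_fin, hint, smul_eq_mul, mul_one]
  exact inv_mul_cancel₀ (pow_ne_zero n hδ.ne')

end kernel

/-- Smoothness of the mollification. -/
lemma aux_phi_smooth {f k φ : EuclideanSpace ℝ (Fin n) → ℝ}
    (hfcont : Continuous f) (hksm : ContDiff ℝ (⊤ : ℕ∞) k) (hksupp : HasCompactSupport k)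
    (hφ : ∀ x, φ x = ∫ y, f (x - y) * k y) : ContDiff ℝ (⊤ : ℕ∞) φ := by
  have heq : φ = convolution k f (ContinuousLinearMap.mul ℝ ℝ) volume := by
    funext x
    rw [hφ, convolution_def]
    simp only [ContinuousLinearMap.mul_apply']
    exact integral_congr_ae (Filter.Eventually.of_forall fun y => mul_comm _ _)
  rw [heq]
  exact hksupp.contDiff_convolution_left _ hksm hfcont.locallyIntegrable

/-- Restriction of a convex function to a line is convex. -/
lemma aux_comp_line {φ : EuclideanSpace ℝ (Fin n) → ℝ} (h : ConvexOn ℝ Set.univ φ)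
    (x v : E) : ConvexOn ℝ Set.univ fun t : ℝ => φ (x + t • v) := by
  refine ⟨convex_univ, fun s _ t _ a b ha hb hab => ?_⟩
  have e : x + (a • s + b • t) • v = a • (x + s • v) + b • (x + t • v) := by
    have : a • (x + s • v) + b • (x + t • v) = (a + b) • x + (a * s + b * t) • v := by
      module
    rw [this, hab, one_smul]; simp [smul_eq_mul]
  simp only [e]
  exact h.2 (mem_univ _) (mem_univ _) ha hb hab

/-- Derivative of a smooth function along a line. -/
lemma aux_line_deriv {φ : EuclideanSpace ℝ (Fin n) → ℝ} (hφ : ContDiff ℝ (⊤ : ℕ∞) φ)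
    (x v : E) (t : ℝ) :
    HasDerivAt (fun s : ℝ => φ (x + s • v)) (fderiv ℝ φ (x + t • v) v) t := by
  have hline : HasDerivAt (fun s : ℝ => x + s • v) v t := by
    simpa using ((hasDerivAt_id t).smul_const v).const_add x
  have hd := (hφ.differentiable (by simp) (x + t • v)).hasFDerivAt
  simpa [Function.comp_def] using hd.comp_hasDerivAt t hline

/-- Second derivative of a smooth function along a line, at the base point. -/
lemma aux_line_deriv2 {φ : EuclideanSpace ℝ (Fin n) → ℝ} (hφ : ContDiff ℝ (⊤ : ℕ∞) φ)
    (x v : E) :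
    HasDerivAt (fun t : ℝ => fderiv ℝ φ (x + t • v) v) (fderiv ℝ (fderiv ℝ φ) x v v) 0 := by
  have hline : HasDerivAt (fun s : ℝ => x + s • v) v 0 := by
    simpa using ((hasDerivAt_id (0:ℝ)).smul_const v).const_add x
  have hF : DifferentiableAt ℝ (fderiv ℝ φ) x :=
    ((hφ.fderiv_right (m := ((⊤:ℕ∞) : WithTop ℕ∞)) (mod_cast le_top)).differentiable
      (by simp)) x
  have h1 : HasFDerivAt (fun y => fderiv ℝ φ y v)
      ((ContinuousLinearMap.apply ℝ ℝ v).comp (fderiv ℝ (fderiv ℝ φ) x)) x :=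
    ((ContinuousLinearMap.apply ℝ ℝ v).hasFDerivAt).comp x hF.hasFDerivAt
  have h0 : x = x + (0:ℝ) • v := by simp
  rw [h0] at h1
  have := h1.comp_hasDerivAt 0 hline
  simpa [Function.comp_def] using this

end Aux

/-- The second Fréchet derivative of the mollified squared distance `φ_δ = d_C² ⋆ η_δ`
satisfies `0 ≤ D²φ_δ(x)[v, v] ≤ 2‖v‖²` for every `x, v ∈ ℝ^n`. -/
theorem mollified_infDist_sq_second_deriv_bounds {n : ℕ} (C : Set (EuclideanSpace ℝ (Fin n)))
    (hne : C.Nonempty) (hclosed : IsClosed C) (hconv : Convex ℝ C)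
    (η : EuclideanSpace ℝ (Fin n) → ℝ) (hsm : ContDiff ℝ (⊤ : ℕ∞) η)
    (hpos : ∀ x, 0 ≤ η x) (hsupp : Function.support η ⊆ Metric.closedBall 0 1)
    (hint : ∫ x, η x = 1) (δ : ℝ) (hδ : 0 < δ)
    (φ : EuclideanSpace ℝ (Fin n) → ℝ)
    (hφ : ∀ x, φ x = ∫ y, Metric.infDist (x - y) C ^ 2 * ((δ ^ n)⁻¹ * η (δ⁻¹ • y))) :
    ∀ x v : EuclideanSpace ℝ (Fin n),
      0 ≤ fderiv ℝ (fderiv ℝ φ) x v v ∧ fderiv ℝ (fderiv ℝ φ) x v v ≤ 2 * ‖v‖ ^ 2 := by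
  intro x v
  set f : EuclideanSpace ℝ (Fin n) → ℝ := fun z => infDist z C ^ 2 with hfdef
  set k : EuclideanSpace ℝ (Fin n) → ℝ := fun y => (δ ^ n)⁻¹ * η (δ⁻¹ • y) with hkdef
  have hφ' : ∀ x', φ x' = ∫ y, f (x' - y) * k y := hφ
  have hfcont : Continuous f := (continuous_infDist_pt C).pow 2
  have hfconv : ConvexOn ℝ Set.univ f := aux_infDist_sq_convexOn C hne hclosed hconv
  have hgconv : ConvexOn ℝ Set.univ (fun z : EuclideanSpace ℝ (Fin n) => ‖z‖ ^ 2 - f z) :=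
    aux_normsq_sub_convexOn C hne hclosed
  have hgcont : Continuous (fun z : EuclideanSpace ℝ (Fin n) => ‖z‖ ^ 2 - f z) :=
    (continuous_norm.pow 2).sub hfcont
  have hksm : ContDiff ℝ (⊤ : ℕ∞) k := aux_k_smooth η δ hsm
  have hkcont : Continuous k := hksm.continuous
  have hksupp : HasCompactSupport k := aux_k_supp η δ hsupp hδ
  have hkpos : ∀ y, 0 ≤ k y := fun y =>
    mul_nonneg (inv_nonneg.2 (pow_nonneg hδ.le n)) (hpos _)
  have hkint : ∫ y, k y = 1 := aux_k_int η δ hδ hint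
  have hφsm : ContDiff ℝ (⊤ : ℕ∞) φ := aux_phi_smooth hfcont hksm hksupp hφ'
  have hφconv : ConvexOn ℝ Set.univ φ := by
    have h := aux_conv_convexOn hfconv hfcont hkcont hkpos hksupp
    have e : φ = fun x' => ∫ y, f (x' - y) * k y := funext hφ'
    rw [e]; exact h
  -- lower bound
  have hderivu : deriv (fun t : ℝ => φ (x + t • v))
      = fun t => fderiv ℝ φ (x + t • v) v :=
    funext fun t => (aux_line_deriv hφsm x v t).deriv
  have humono : Monotone (deriv (fun t : ℝ => φ (x + t • v))) := by
    have := (aux_comp_line hφconv x v).monotoneOn_deriv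
      (fun t _ => (aux_line_deriv hφsm x v t).differentiableAt)
    rwa [monotoneOn_univ] at this
  have hlow : 0 ≤ fderiv ℝ (fderiv ℝ φ) x v v := by
    refine aux_deriv_nonneg_of_monotone (a := 0) humono ?_
    rw [hderivu]; exact aux_line_deriv2 hφsm x v
  refine ⟨hlow, ?_⟩
  -- upper bound
  set A : ℝ := ∫ y, ‖x - y‖ ^ 2 * k y with hA
  set B : ℝ := ∫ y, (2 * (inner ℝ (x - y) v : ℝ)) * k y with hB
  have hInormsq : ∀ x' : EuclideanSpace ℝ (Fin n),
      Integrable (fun y => ‖x' - y‖ ^ 2 * k y) := fun x' =>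
    aux_integrable_conv (continuous_norm.pow 2) hkcont hksupp x'
  have hIinner : Integrable (fun y => (2 * (inner ℝ (x - y) v : ℝ)) * k y) :=
    aux_integrable_conv (u := fun z => 2 * (inner ℝ z v : ℝ))
      (continuous_const.mul (continuous_id.inner continuous_const)) hkcont hksupp x
  have hIf : ∀ x', Integrable (fun y => f (x' - y) * k y) := fun x' =>
    aux_integrable_conv hfcont hkcont hksupp x'
  have hq : ∀ t : ℝ, (∫ y, ‖(x + t • v) - y‖ ^ 2 * k y) = A + B * t + t ^ 2 * ‖v‖ ^ 2 := by
    intro t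
    have hpoint : ∀ y : EuclideanSpace ℝ (Fin n), ‖(x + t • v) - y‖ ^ 2 * k y
        = ‖x - y‖ ^ 2 * k y + t * ((2 * (inner ℝ (x - y) v : ℝ)) * k y)
          + (t ^ 2 * ‖v‖ ^ 2) * k y := by
      intro y
      have e : (x + t • v) - y = (x - y) + t • v := by module
      have h2 : ‖(x - y) + t • v‖ ^ 2
          = ‖x - y‖ ^ 2 + 2 * (t * (inner ℝ (x - y) v : ℝ)) + t ^ 2 * ‖v‖ ^ 2 := by
        rw [norm_add_sq_real, real_inner_smul_right, norm_smul, Real.norm_eq_abs,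
          mul_pow, sq_abs]
      rw [e, h2]; ring
    have hIk : Integrable k := by
      have := aux_integrable_conv continuous_const hkcont hksupp x (u := fun _ => (1:ℝ))
      simpa using this
    rw [integral_congr_ae (Filter.Eventually.of_forall hpoint)]
    have h12 : Integrable (fun y => ‖x - y‖ ^ 2 * k y
        + t * ((2 * (inner ℝ (x - y) v : ℝ)) * k y)) volume :=
      (hInormsq x).add (hIinner.const_mul t)
    have h3 : Integrable (fun y => (t ^ 2 * ‖v‖ ^ 2) * k y) volume :=
      hIk.const_mul (t ^ 2 * ‖v‖ ^ 2)
    rw [integral_add h12 h3, integral_add (hInormsq x) (hIinner.const_mul t),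
      integral_const_mul, integral_const_mul]
    rw [hkint, ← hA, ← hB]; ring
  have hψconv : ConvexOn ℝ Set.univ
      (fun x' : EuclideanSpace ℝ (Fin n) => ∫ y, (‖x' - y‖ ^ 2 - f (x' - y)) * k y) :=
    aux_conv_convexOn hgconv hgcont hkcont hkpos hksupp
  have hψeq : ∀ x', (∫ y, (‖x' - y‖ ^ 2 - f (x' - y)) * k y)
      = (∫ y, ‖x' - y‖ ^ 2 * k y) - φ x' := by
    intro x'
    rw [hφ' x', ← integral_sub (hInormsq x') (hIf x')]
    exact integral_congr_ae (Filter.Eventually.of_forall fun y => by ring)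
  have hWconv : ConvexOn ℝ Set.univ
      (fun t : ℝ => A + B * t + t ^ 2 * ‖v‖ ^ 2 - φ (x + t • v)) := by
    have h1 := aux_comp_line hψconv x v
    have e : (fun t : ℝ => A + B * t + t ^ 2 * ‖v‖ ^ 2 - φ (x + t • v))
        = fun t : ℝ => ∫ y, (‖(x + t • v) - y‖ ^ 2 - f ((x + t • v) - y)) * k y :=
      funext fun t => by rw [hψeq, hq]
    rw [e]; exact h1
  have hW' : ∀ t : ℝ, HasDerivAt (fun s : ℝ => A + B * s + s ^ 2 * ‖v‖ ^ 2 - φ (x + s • v))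
      (B + t * (2 * ‖v‖ ^ 2) - fderiv ℝ φ (x + t • v) v) t := by
    intro t
    have h1 : HasDerivAt (fun s : ℝ => A + B * s + s ^ 2 * ‖v‖ ^ 2)
        (B + t * (2 * ‖v‖ ^ 2)) t := by
      have := ((hasDerivAt_const t A).add ((hasDerivAt_id t).const_mul B)).add
        ((hasDerivAt_pow 2 t).mul_const (‖v‖ ^ 2))
      exact this.congr_deriv (by norm_num; ring)
    exact h1.sub (aux_line_deriv hφsm x v t)
  have hderivW : deriv (fun s : ℝ => A + B * s + s ^ 2 * ‖v‖ ^ 2 - φ (x + s • v))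
      = fun t => B + t * (2 * ‖v‖ ^ 2) - fderiv ℝ φ (x + t • v) v :=
    funext fun t => (hW' t).deriv
  have hWmono : Monotone (deriv (fun s : ℝ => A + B * s + s ^ 2 * ‖v‖ ^ 2 - φ (x + s • v))) := by
    have := hWconv.monotoneOn_deriv (fun t _ => (hW' t).differentiableAt)
    rwa [monotoneOn_univ] at this
  have hW2 : HasDerivAt (deriv (fun s : ℝ => A + B * s + s ^ 2 * ‖v‖ ^ 2 - φ (x + s • v)))
      (2 * ‖v‖ ^ 2 - fderiv ℝ (fderiv ℝ φ) x v v) 0 := by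
    rw [hderivW]
    have h1 : HasDerivAt (fun t : ℝ => B + t * (2 * ‖v‖ ^ 2)) (2 * ‖v‖ ^ 2) 0 := by
      simpa using ((hasDerivAt_id (0:ℝ)).mul_const (2 * ‖v‖ ^ 2)).const_add B
    exact h1.sub (aux_line_deriv2 hφsm x v)
  have := aux_deriv_nonneg_of_monotone hWmono hW2
  linarith
end
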